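/- arXiv:1811.01383 — 2 statements merged into one kernel-verified Lean document; each statement's English description precedes it below -/
import Mathlib

section
/- For every P × L matrix A with integer entries there exists a P × P integer matrix U which is invertible over the integers (unimodular) such that the matrix H = U·A is upper triangular, i.e. H(i,j) = 0 whenever j < i. -/
open Matrix

/-- Extend an `n × n` matrix to `(n+1) × (n+1)` by putting a `1` in the top-left corner. -/
def ext1 {n : ℕ} (W : Matrix (Fin n) (Fin n) ℤ) : Matrix (Fin (n+1)) (Fin (n+1)) ℤ :=
  Matrix.of fun i j =>
    Fin.cases (Fin.cases 1 (fun _ => 0) j) (fun i' => Fin.cases 0 (fun j' => W i' j') j) i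

@[simp] lemma ext1_zero_zero {n : ℕ} (W : Matrix (Fin n) (Fin n) ℤ) : ext1 W 0 0 = 1 := rfl
@[simp] lemma ext1_zero_succ {n : ℕ} (W : Matrix (Fin n) (Fin n) ℤ) (j : Fin n) :
    ext1 W 0 j.succ = 0 := rfl
@[simp] lemma ext1_succ_zero {n : ℕ} (W : Matrix (Fin n) (Fin n) ℤ) (i : Fin n) :
    ext1 W i.succ 0 = 0 := rfl
@[simp] lemma ext1_succ_succ {n : ℕ} (W : Matrix (Fin n) (Fin n) ℤ) (i j : Fin n) :
    ext1 W i.succ j.succ = W i j := rfl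

lemma ext1_mul {n : ℕ} (W W' : Matrix (Fin n) (Fin n) ℤ) :
    ext1 W * ext1 W' = ext1 (W * W') := by
  ext i j
  refine Fin.cases ?_ (fun i' => ?_) i <;> refine Fin.cases ?_ (fun j' => ?_) j <;>
    simp [Matrix.mul_apply, Fin.sum_univ_succ]

lemma ext1_one {n : ℕ} : ext1 (1 : Matrix (Fin n) (Fin n) ℤ) = 1 := by
  ext i j
  refine Fin.cases ?_ (fun i' => ?_) i <;> refine Fin.cases ?_ (fun j' => ?_) j <;>
    simp [Matrix.one_apply, Fin.succ_ne_zero, (Fin.succ_ne_zero _).symm,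
      (Fin.succ_injective _).eq_iff]

lemma isUnit_ext1 {n : ℕ} {W : Matrix (Fin n) (Fin n) ℤ} (h : IsUnit W) :
    IsUnit (ext1 W) := by
  obtain ⟨u, rfl⟩ := h
  refine isUnit_iff_exists.2 ⟨ext1 u.inv, ?_, ?_⟩ <;>
    rw [ext1_mul] <;> simp [ext1_one]

lemma ext1_mul_apply_zero {n L : ℕ} (W : Matrix (Fin n) (Fin n) ℤ)
    (A : Matrix (Fin (n+1)) (Fin L) ℤ) (j : Fin L) :
    (ext1 W * A) 0 j = A 0 j := by
  simp [Matrix.mul_apply, Fin.sum_univ_succ]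

lemma ext1_mul_apply_succ {n L : ℕ} (W : Matrix (Fin n) (Fin n) ℤ)
    (A : Matrix (Fin (n+1)) (Fin L) ℤ) (i : Fin n) (j : Fin L) :
    (ext1 W * A) i.succ j = ∑ k, W i k * A k.succ j := by
  simp [Matrix.mul_apply, Fin.sum_univ_succ]

/-- A matrix acting on the first two rows only. -/
def bez {n : ℕ} (a b c d : ℤ) : Matrix (Fin (n+2)) (Fin (n+2)) ℤ :=
  Matrix.of fun i j =>
    if i = 0 then (if j = 0 then a else if j = (1 : Fin (n+2)) then b else 0)
    else if i = 1 then (if j = 0 then c else if j = (1 : Fin (n+2)) then d else 0)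
    else if j = i then 1 else 0

lemma one_ne_ss {n : ℕ} (i : Fin n) : (1 : Fin (n+2)) ≠ i.succ.succ := by
  rw [← Fin.succ_zero_eq_one, (Fin.succ_injective _).ne_iff]
  exact (Fin.succ_ne_zero i).symm

lemma ss_ne_one {n : ℕ} (i : Fin n) : i.succ.succ ≠ (1 : Fin (n+2)) := (one_ne_ss i).symm

lemma bez_mul_apply_zero {n L : ℕ} (a b c d : ℤ) (M : Matrix (Fin (n+2)) (Fin L) ℤ)
    (j : Fin L) : (bez (n := n) a b c d * M) 0 j = a * M 0 j + b * M 1 j := by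
  rw [Matrix.mul_apply, Fin.sum_univ_succ, Fin.sum_univ_succ]
  rw [Finset.sum_eq_zero (fun k _ => ?_)]
  · simp [bez, Fin.succ_zero_eq_one]
  · simp [bez, Fin.succ_ne_zero, ss_ne_one]

lemma bez_mul_apply_one {n L : ℕ} (a b c d : ℤ) (M : Matrix (Fin (n+2)) (Fin L) ℤ)
    (j : Fin L) : (bez (n := n) a b c d * M) 1 j = c * M 0 j + d * M 1 j := by
  rw [Matrix.mul_apply, Fin.sum_univ_succ, Fin.sum_univ_succ]
  rw [Finset.sum_eq_zero (fun k _ => ?_)]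
  · simp [bez, Fin.succ_zero_eq_one, (Fin.succ_ne_zero (0 : Fin (n+1))).symm]
  · simp [bez, Fin.succ_ne_zero, ss_ne_one]

lemma bez_mul_apply_ss {n L : ℕ} (a b c d : ℤ) (M : Matrix (Fin (n+2)) (Fin L) ℤ)
    (i : Fin n) (j : Fin L) : (bez (n := n) a b c d * M) i.succ.succ j = M i.succ.succ j := by
  rw [Matrix.mul_apply]
  rw [Finset.sum_eq_single i.succ.succ (fun k _ hk => ?_) (by simp)]
  · simp [bez, Fin.succ_ne_zero, ss_ne_one]
  · simp only [bez, Matrix.of_apply]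
    rcases eq_or_ne k 0 with rfl | hk0
    · simp [Fin.succ_ne_zero, ss_ne_one, (Fin.succ_ne_zero _).symm, hk]
    rcases eq_or_ne k 1 with rfl | hk1
    · simp [Fin.succ_ne_zero, ss_ne_one, one_ne_ss]
    · simp [hk0, hk1, hk]

lemma isUnit_bez {n : ℕ} {a b c d : ℤ} (h : a * d - b * c = 1) :
    IsUnit (bez (n := n) a b c d) := by
  rw [Matrix.isUnit_iff_isUnit_det]
  have : (bez (n := n) a b c d) * bez d (-b) (-c) a = 1 := by
    ext i j
    refine Fin.cases ?_ (fun i' => Fin.cases ?_ (fun i'' => ?_) i') i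
    · rw [bez_mul_apply_zero]
      simp only [bez, Matrix.of_apply, Matrix.one_apply]
      rcases eq_or_ne j 0 with rfl | hj0
      · simp; linarith
      rcases eq_or_ne j 1 with rfl | hj1
      · simp [(Fin.succ_ne_zero (0:Fin (n+1))).symm]; ring
      · simp [hj0, hj1, Ne.symm hj0]
    · rw [Fin.succ_zero_eq_one, bez_mul_apply_one]
      simp only [bez, Matrix.of_apply, Matrix.one_apply]
      rcases eq_or_ne j 0 with rfl | hj0
      · simp [(Fin.succ_ne_zero (0:Fin (n+1))).symm]; ring
      rcases eq_or_ne j 1 with rfl | hj1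
      · simp [(Fin.succ_ne_zero (0:Fin (n+1))).symm]; linarith
      · simp [hj0, hj1, Ne.symm hj0, Ne.symm hj1]
    · rw [bez_mul_apply_ss]
      simp only [bez, Matrix.of_apply, Matrix.one_apply]
      simp [Fin.succ_ne_zero, (one_ne_ss i'').symm, eq_comm]
  have hdet := congrArg Matrix.det this
  rw [Matrix.det_mul, Matrix.det_one] at hdet
  exact IsUnit.of_mul_eq_one _ hdet

/-- Column clearing: there is a unimodular `U` such that column `0` of `U * A`
vanishes below the first row. -/
lemma col_clear : ∀ (n L : ℕ) (A : Matrix (Fin n) (Fin (L+1)) ℤ),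
    ∃ U : Matrix (Fin n) (Fin n) ℤ, IsUnit U ∧
      ∀ i : Fin n, 0 < (i : ℕ) → (U * A) i 0 = 0 := by
  intro n
  induction n with
  | zero => exact fun L A => ⟨1, isUnit_one, fun i => absurd i.2 (by omega)⟩
  | succ n ih =>
    intro L A
    match n, ih with
    | 0, _ =>
      exact ⟨1, isUnit_one, fun i hi => by have := i.2; omega⟩
    | n+1, ih =>
      -- A : Matrix (Fin (n+2)) (Fin (L+1))
      obtain ⟨W, hW, hWz⟩ := ih L (Matrix.of fun i j => A i.succ j)
      set B := ext1 W * A with hB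
      have hB0 : ∀ i : Fin (n+1), 0 < (i : ℕ) → B i.succ 0 = 0 := by
        intro i hi
        rw [hB, ext1_mul_apply_succ]
        simpa [Matrix.mul_apply] using hWz i hi
      -- now clear the entry at row 1 using a Bezout matrix on rows 0,1
      rcases eq_or_ne (B 1 0) 0 with h10 | h10
      · refine ⟨ext1 W, isUnit_ext1 hW, fun i hi => ?_⟩
        rcases Fin.eq_zero_or_eq_succ i with rfl | ⟨i', rfl⟩
        · simp at hi
        rcases Fin.eq_zero_or_eq_succ i' with rfl | ⟨i'', rfl⟩
        · rw [← hB, Fin.succ_zero_eq_one]; exact h10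
        · exact hB0 i''.succ (by simp [Fin.lt_iff_val_lt_val])
      · set x := B 0 0 with hx
        set y := B 1 0 with hy
        set g : ℤ := (Int.gcd x y : ℤ) with hg
        have hgy : g ∣ y := Int.gcd_dvd_right x y
        have hgx : g ∣ x := Int.gcd_dvd_left x y
        obtain ⟨x', hx'⟩ := hgx
        obtain ⟨y', hy'⟩ := hgy
        have hgne : g ≠ 0 := by
          intro h0
          exact h10 (by rw [hy', h0, zero_mul])
        have hbezout : x * Int.gcdA x y + y * Int.gcdB x y = g := (Int.gcd_eq_gcd_ab x y).symm
        set a := Int.gcdA x y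
        set b := Int.gcdB x y
        have hdet : a * x' - b * (-y') = 1 := by
          have : g * (a * x' + b * y') = g * 1 := by
            rw [mul_one]
            calc g * (a * x' + b * y') = x * a + y * b := by rw [hx', hy']; ring
            _ = g := by linarith [hbezout]
          have := mul_left_cancel₀ hgne this
          linarith
        refine ⟨bez a b (-y') x' * ext1 W, (isUnit_bez hdet).mul (isUnit_ext1 hW),
          fun i hi => ?_⟩
        rw [Matrix.mul_assoc, ← hB]
        rcases Fin.eq_zero_or_eq_succ i with rfl | ⟨i', rfl⟩
        · simp at hi
        rcases Fin.eq_zero_or_eq_succ i' with rfl | ⟨i'', rfl⟩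
        · rw [Fin.succ_zero_eq_one, bez_mul_apply_one, ← hx, ← hy, hx', hy']
          ring
        · rw [bez_mul_apply_ss]
          exact hB0 i''.succ (by simp [Fin.lt_iff_val_lt_val])

/-- For every `P × L` integer matrix `A` there exists a unimodular `P × P`
integer matrix `U` (invertible over `ℤ`) such that `H = U * A` is upper
triangular, i.e. `H i j = 0` whenever `j < i`. -/
theorem hermite_normal_form_exists (P L : ℕ) (A : Matrix (Fin P) (Fin L) ℤ) :
    ∃ U : Matrix (Fin P) (Fin P) ℤ, IsUnit U ∧
      ∀ (i : Fin P) (j : Fin L), (j : ℕ) < (i : ℕ) → (U * A) i j = 0 := by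
  induction L generalizing P with
  | zero => exact ⟨1, isUnit_one, fun i j => absurd j.2 (by omega)⟩
  | succ L ih =>
    match P, A with
    | 0, A => exact ⟨1, isUnit_one, fun i => absurd i.2 (by omega)⟩
    | P+1, A =>
      obtain ⟨U₀, hU₀, hU₀z⟩ := col_clear (P+1) L A
      set B := U₀ * A with hB
      -- apply induction to the lower-right submatrix
      obtain ⟨W, hW, hWz⟩ := ih P (Matrix.of fun i j => B i.succ j.succ)
      refine ⟨ext1 W * U₀, (isUnit_ext1 hW).mul hU₀, fun i j hij => ?_⟩
      rw [Matrix.mul_assoc, ← hB]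
      rcases Fin.eq_zero_or_eq_succ i with rfl | ⟨i', rfl⟩
      · simp at hij
      rw [ext1_mul_apply_succ]
      rcases Fin.eq_zero_or_eq_succ j with rfl | ⟨j', rfl⟩
      · exact Finset.sum_eq_zero fun k _ => by
          rw [hU₀z k.succ (by simp), mul_zero]
      · simpa [Matrix.mul_apply] using hWz i' j' (by simpa [Fin.val_succ] using hij)
end

section
/- Let R be a real upper triangular N × N matrix with R_{N,N} > 0, let z ∈ ℝ^N, d ≥ 0, and let x ∈ ℤ^N be such that ‖z − R·x‖² ≤ d². Then ⌈(z_N − d)/R_{N,N}⌉ ≤ x_N ≤ ⌊(z_N + d)/R_{N,N}⌋. -/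
/-- Sphere decoding bound on the last coordinate: if `R` is upper triangular
with `R (N,N) > 0` and the integer vector `x` satisfies `‖z − R·x‖² ≤ d²`,
then `⌈(z_N − d)/R_{N,N}⌉ ≤ x_N ≤ ⌊(z_N + d)/R_{N,N}⌋`. -/
theorem sphere_decoding_last_coordinate_bounds (N : ℕ) (hN : 0 < N)
    (R : Matrix (Fin N) (Fin N) ℝ)
    (hR : ∀ i j : Fin N, j < i → R i j = 0)
    (hRNN : R ⟨N - 1, by omega⟩ ⟨N - 1, by omega⟩ > 0)
    (z : Fin N → ℝ) (d : ℝ) (hd : 0 ≤ d) (x : Fin N → ℤ)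
    (hx : ∑ i, (z i - ∑ j, R i j * (x j : ℝ)) ^ 2 ≤ d ^ 2) :
    ⌈(z ⟨N - 1, by omega⟩ - d) / R ⟨N - 1, by omega⟩ ⟨N - 1, by omega⟩⌉ ≤
        x ⟨N - 1, by omega⟩ ∧
      x ⟨N - 1, by omega⟩ ≤
        ⌊(z ⟨N - 1, by omega⟩ + d) / R ⟨N - 1, by omega⟩ ⟨N - 1, by omega⟩⌋ := by
  set n : Fin N := ⟨N - 1, by omega⟩ with hn
  have hrow : ∑ j, R n j * (x j : ℝ) = R n n * (x n : ℝ) := by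
    refine Finset.sum_eq_single n (fun j _ hj => ?_) (by simp)
    have hjlt : j < n := by
      have h1 := j.isLt
      have h2 : j.val ≠ n.val := fun h => hj (Fin.ext h)
      have h3 : n.val = N - 1 := rfl
      exact Fin.lt_def.mpr (by omega)
    rw [hR n j hjlt, zero_mul]
  have hterm : (z n - R n n * (x n : ℝ)) ^ 2 ≤ d ^ 2 := by
    calc (z n - R n n * (x n : ℝ)) ^ 2
        = (z n - ∑ j, R n j * (x j : ℝ)) ^ 2 := by rw [hrow]
      _ ≤ ∑ i, (z i - ∑ j, R i j * (x j : ℝ)) ^ 2 :=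
          Finset.single_le_sum (f := fun i => (z i - ∑ j, R i j * (x j : ℝ)) ^ 2) (fun i _ => sq_nonneg _) (Finset.mem_univ n)
      _ ≤ d ^ 2 := hx
  have h1 : z n - d ≤ R n n * (x n : ℝ) := by nlinarith
  have h2 : R n n * (x n : ℝ) ≤ z n + d := by nlinarith
  constructor
  · rw [Int.ceil_le]
    rw [div_le_iff₀ hRNN]
    linarith [mul_comm (R n n) (x n : ℝ)]
  · rw [Int.le_floor]
    rw [le_div_iff₀ hRNN]
    linarith [mul_comm (R n n) (x n : ℝ)]
end
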